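/- Let G be a connected simple graph on a finite nonempty vertex type V with n vertices. Then the rank over ZMod 2 of the incidence matrix of G equals n − 1. -/

import Mathlib

open Matrix

open Classical in
/-- The incidence matrix over `ZMod 2` of a connected graph on `n ≥ 1` vertices has
rank `n - 1`. -/
theorem rank_incMatrix_connected {V : Type*} [Fintype V] [DecidableEq V] [Nonempty V]
    (G : SimpleGraph V) (hG : G.Connected) :
    (G.incMatrix (ZMod 2)).rank = Fintype.card V - 1 := by
  classical
  set M := G.incMatrix (ZMod 2) with hM
  -- kernel of Mᵀ.mulVecLin is the span of the constant 1 vector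
  have hker : LinearMap.ker (Mᵀ.mulVecLin) = Submodule.span (ZMod 2) {(1 : V → ZMod 2)} := by
    apply le_antisymm
    · intro x hx
      rw [LinearMap.mem_ker] at hx
      have hadj : ∀ u v : V, G.Adj u v → x u = x v := by
        intro u v huv
        have h0 : Mᵀ.mulVec x s(u, v) = 0 := congrFun hx s(u, v)
        have hsum : Mᵀ.mulVec x s(u, v) = x u + x v := by
          rw [Matrix.mulVec, dotProduct]
          have : ∀ w : V, Mᵀ s(u, v) w * x w =
              if w ∈ ({u, v} : Finset V) then x w else 0 := by
            intro w
            simp only [Matrix.transpose_apply, hM]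
            by_cases hw : w ∈ ({u, v} : Finset V)
            · rw [if_pos hw, G.incMatrix_of_mem_incidenceSet, one_mul]
              rw [SimpleGraph.mk'_mem_incidenceSet_iff]
              simp only [Finset.mem_insert, Finset.mem_singleton] at hw
              exact ⟨huv, by tauto⟩
            · rw [if_neg hw, G.incMatrix_of_notMem_incidenceSet, zero_mul]
              rw [SimpleGraph.mk'_mem_incidenceSet_iff]
              simp only [Finset.mem_insert, Finset.mem_singleton] at hw
              push_neg at hw
              rintro ⟨-, h | h⟩ <;> simp_all
          rw [Finset.sum_congr rfl fun w _ => this w, Finset.sum_ite_mem,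
            Finset.univ_inter, Finset.sum_pair huv.ne]
        rw [hsum] at h0
        have : x u = -x v := eq_neg_of_add_eq_zero_left h0
        rw [this]
        exact (CharTwo.neg_eq (x v))
      have hconst : ∀ u v : V, x u = x v := by
        intro u v
        obtain ⟨w⟩ := (hG.preconnected u v)
        induction w with
        | nil => rfl
        | cons h p ih => rw [hadj _ _ h]; exact ih
      obtain ⟨v₀⟩ := ‹Nonempty V›
      have : x = x v₀ • (1 : V → ZMod 2) := by
        funext w; simp [hconst w v₀]
      rw [this]
      exact Submodule.smul_mem _ _ (Submodule.mem_span_singleton_self _)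
    · rw [Submodule.span_singleton_le_iff_mem, LinearMap.mem_ker]
      funext e
      show Mᵀ.mulVec 1 e = 0
      rw [Matrix.mulVec, dotProduct]
      simp only [Pi.one_apply, mul_one, Matrix.transpose_apply, hM]
      by_cases he : e ∈ G.edgeSet
      · rw [G.sum_incMatrix_apply_of_mem_edgeSet he]; decide
      · exact G.sum_incMatrix_apply_of_notMem_edgeSet he
  have hkerrank : Module.finrank (ZMod 2) (LinearMap.ker Mᵀ.mulVecLin) = 1 := by
    rw [hker]
    apply finrank_span_singleton
    intro h
    have := congrFun h (Classical.arbitrary V)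
    simp at this
  have hrn := LinearMap.finrank_range_add_finrank_ker (Mᵀ.mulVecLin)
  rw [hkerrank] at hrn
  have hrank : Mᵀ.rank = M.rank := Matrix.rank_transpose M
  have : Mᵀ.rank + 1 = Fintype.card V := by
    rw [Matrix.rank]
    simpa [Module.finrank_pi] using hrn
  have hpos : 0 < Fintype.card V := Fintype.card_pos
  omega
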